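/- Let g be a centerless Lie 2-algebra over F with toral rank MT(g) = r and let t be a maximal torus of g of dimension r. Then there exists a basis of the dual space t* consisting of t-roots of g, and moreover dim(g) ≥ 2r. -/

import Mathlib

/-- A 2-map on a Lie algebra over the field `F` (char 2 version of a restricted structure):
`(c • x)^[2] = c^2 • x^[2]`, `ad (x^[2]) = (ad x) ∘ (ad x)` and
`(x+y)^[2] = x^[2] + y^[2] + [x,y]`. -/
structure IsTwoMap (F : Type*) [Field F] {g : Type*} [LieRing g] [LieAlgebra F g]
    (p : g → g) : Prop where
  smul_pow : ∀ (c : F) (x : g), p (c • x) = (c ^ 2) • p x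
  ad_pow : ∀ x y : g, ⁅p x, y⁆ = ⁅x, ⁅x, y⁆⁆
  add_pow : ∀ x y : g, p (x + y) = p x + p y + ⁅x, y⁆

/-- An element is 2-nilpotent if some iterate of the 2-map annihilates it. -/
def IsTwoNilpotent {g : Type*} [Zero g] (p : g → g) (x : g) : Prop :=
  ∃ k : ℕ, p^[k] x = 0

/-- A torus of a Lie 2-algebra: a Lie subalgebra closed under the 2-map on which the
2-map is invertible (bijective). -/
def IsTorus (F : Type*) [Field F] {g : Type*} [LieRing g] [LieAlgebra F g]
    (p : g → g) (t : LieSubalgebra F g) : Prop :=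
  (∀ x ∈ t, p x ∈ t) ∧ Set.BijOn p (t : Set g) (t : Set g)

/-- A maximal torus of a Lie 2-algebra. -/
def IsMaxTorus (F : Type*) [Field F] {g : Type*} [LieRing g] [LieAlgebra F g]
    (p : g → g) (t : LieSubalgebra F g) : Prop :=
  IsTorus F p t ∧ ∀ s : LieSubalgebra F g, IsTorus F p s → t ≤ s → s = t

/-- The weight (root) space of a linear functional `lam` on a torus `t`:
`g_lam = {v | [x, v] = lam x • v for all x ∈ t}`. -/
def rootSpace {F : Type*} [Field F] {g : Type*} [LieRing g] [LieAlgebra F g]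
    (t : LieSubalgebra F g) (lam : Module.Dual F t) : Submodule F g where
  carrier := {v | ∀ x : t, ⁅(x : g), v⁆ = lam x • v}
  add_mem' := by
    intro a b ha hb x
    rw [lie_add, ha x, hb x, smul_add]
  zero_mem' := by
    intro x
    rw [lie_zero, smul_zero]
  smul_mem' := by
    intro c v hv x
    rw [lie_smul, hv x, smul_comm]

/-- The set of `t`-roots: nonzero functionals with nonzero root space. -/
def rootSet {F : Type*} [Field F] {g : Type*} [LieRing g] [LieAlgebra F g]
    (t : LieSubalgebra F g) : Set (Module.Dual F t) :=
  {lam | lam ≠ 0 ∧ rootSpace t lam ≠ ⊥}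

/-- The subspace `N(σ, δ) = {x ∈ g_σ : [x, g_σ] ⊆ n and [[x, g_δ], g_{σ+δ}] ⊆ n}`,
given as `Nspace n g_σ g_δ g_{σ+δ}`. -/
def Nspace {F : Type*} [Field F] {g : Type*} [LieRing g] [LieAlgebra F g]
    (n gs gd gsd : Submodule F g) : Submodule F g where
  carrier := {x | x ∈ gs ∧ (∀ y ∈ gs, ⁅x, y⁆ ∈ n) ∧ ∀ z ∈ gd, ∀ w ∈ gsd, ⁅⁅x, z⁆, w⁆ ∈ n}
  add_mem' := by
    intro a b ha hb
    obtain ⟨ha1, ha2, ha3⟩ := ha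
    obtain ⟨hb1, hb2, hb3⟩ := hb
    refine ⟨gs.add_mem ha1 hb1, fun y hy => ?_, fun z hz w hw => ?_⟩
    · rw [add_lie]
      exact n.add_mem (ha2 y hy) (hb2 y hy)
    · rw [add_lie, add_lie]
      exact n.add_mem (ha3 z hz w hw) (hb3 z hz w hw)
  zero_mem' := by
    refine ⟨gs.zero_mem, fun y hy => ?_, fun z hz w hw => ?_⟩
    · rw [zero_lie]; exact n.zero_mem
    · rw [zero_lie, zero_lie]; exact n.zero_mem
  smul_mem' := by
    intro c x hx
    obtain ⟨h1, h2, h3⟩ := hx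
    refine ⟨gs.smul_mem c h1, fun y hy => ?_, fun z hz w hw => ?_⟩
    · rw [smul_lie]; exact n.smul_mem c (h2 y hy)
    · rw [smul_lie, smul_lie]; exact n.smul_mem c (h3 z hz w hw)

attribute [local instance] LieRing.ofAssociativeRing

section Helpers

open Module Polynomial

variable {F : Type*} [Field F] {g : Type*} [LieRing g] [LieAlgebra F g]

section helpers
variable {p : g → g} (hp : IsTwoMap F p)

include hp

lemma tm_zero : p 0 = 0 := by simpa using hp.smul_pow 0 0

lemma ad_iterate (x : g) (k : ℕ) (y : g) :
    ⁅p^[k] x, y⁆ = ((LieAlgebra.ad F g x) ^ (2 ^ k)) y := by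
  induction k generalizing y with
  | zero => simp [LieAlgebra.ad_apply]
  | succ k ih =>
      rw [Function.iterate_succ_apply', hp.ad_pow, ih, ih, pow_succ, pow_mul]
      rw [pow_two, Module.End.mul_apply]

lemma lie_self_iterate (x : g) (k : ℕ) : ⁅x, p^[k] x⁆ = 0 := by
  cases k with
  | zero => simp
  | succ k =>
    have h := ad_iterate hp x (k+1) x
    have h0 : (LieAlgebra.ad F g x) x = 0 := by simp [LieAlgebra.ad_apply]
    have : ((LieAlgebra.ad F g x) ^ (2 ^ (k+1))) x = 0 := by
      have h2 : 2 ^ (k+1) = 2 ^ (k+1) - 1 + 1 :=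
        (Nat.sub_add_cancel Nat.one_le_two_pow).symm
      rw [h2, pow_succ, Module.End.mul_apply, h0, map_zero]
    rw [← lie_skew, h, this, neg_zero]

lemma lie_iterate_iterate (x : g) (j k : ℕ) : ⁅p^[j] x, p^[k] x⁆ = 0 := by
  rw [ad_iterate hp x j]
  cases j with
  | zero => simpa using lie_self_iterate hp x k
  | succ j =>
    have h0 : (LieAlgebra.ad F g x) (p^[k] x) = 0 := by
      simp [LieAlgebra.ad_apply, lie_self_iterate hp x k]
    have h2 : 2 ^ (j+1) = 2 ^ (j+1) - 1 + 1 :=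
      (Nat.sub_add_cancel Nat.one_le_two_pow).symm
    rw [h2, pow_succ, Module.End.mul_apply, h0, map_zero]

lemma tm_sum {ι : Type*} (s : Finset ι) (c : ι → F) (v : ι → g)
    (hv : ∀ i j, ⁅v i, v j⁆ = 0) :
    p (∑ i ∈ s, c i • v i) = ∑ i ∈ s, (c i) ^ 2 • p (v i) := by
  classical
  induction s using Finset.induction with
  | empty => simpa using tm_zero hp
  | @insert a s ha ih =>
    rw [Finset.sum_insert ha, Finset.sum_insert ha, hp.add_pow, ih, hp.smul_pow]
    have : ⁅c a • v a, ∑ i ∈ s, c i • v i⁆ = 0 := by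
      have h : ⁅v a, ∑ i ∈ s, c i • v i⁆ = 0 := by
        rw [← LieAlgebra.ad_apply (R := F), map_sum]
        simp only [map_smul, LieAlgebra.ad_apply, hv, smul_zero, Finset.sum_const_zero]
      rw [smul_lie, h, smul_zero]
    rw [this, add_zero]

end helpers

lemma lie_eq_zero_of_mem_span {s : Set g}
    (hs : ∀ a ∈ s, ∀ b ∈ s, ⁅a, b⁆ = 0) :
    ∀ v ∈ Submodule.span F s, ∀ w ∈ Submodule.span F s, ⁅v, w⁆ = 0 := by
  have h1 : ∀ a ∈ s, ∀ w ∈ Submodule.span F s, ⁅a, w⁆ = 0 := by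
    intro a ha w hw
    induction hw using Submodule.span_induction with
    | mem y hy => exact hs a ha y hy
    | zero => simp
    | add y z _ _ hy hz => rw [lie_add, hy, hz, add_zero]
    | smul c y _ hy => rw [lie_smul, hy, smul_zero]
  intro v hv w hw
  induction hv using Submodule.span_induction with
  | mem y hy => exact h1 y hy w hw
  | zero => simp
  | add y z _ _ hy hz => rw [add_lie, hy, hz, add_zero]
  | smul c y _ hy => rw [smul_lie, hy, smul_zero]

lemma exists_comb [IsAlgClosed F] [FiniteDimensional F g]
    {p : g → g} (hp : IsTwoMap F p) {t : LieSubalgebra F g} (ht : IsTorus F p t)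
    {x : g} (hx : x ∈ t) :
    ∃ (m : ℕ) (c : Fin m → F), x = ∑ i, c i • p^[(i : ℕ) + 1] x := by
  classical
  set q : ℕ → g := fun k => p^[k] x with hq_def
  have hqt : ∀ k, q k ∈ t := by
    intro k
    induction k with
    | zero => exact hx
    | succ k ih =>
        have : q (k+1) = p (q k) := Function.iterate_succ_apply' p k x
        rw [this]; exact ht.1 _ ih
  have hqcomm : ∀ i j, ⁅q i, q j⁆ = 0 := fun i j => lie_iterate_iterate hp x i j
  -- the chain of spans
  set S : ℕ → Submodule F g :=
    fun m => Submodule.span F (Set.range fun i : Fin (m+1) => q i) with hS_def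
  have hSmono : Monotone S := by
    intro m m' hmm
    apply Submodule.span_le.2
    rintro _ ⟨i, rfl⟩
    exact Submodule.subset_span ⟨⟨i, by omega⟩, rfl⟩
  obtain ⟨n, hn⟩ := monotone_stabilizes_iff_noetherian.2 (inferInstance) ⟨S, hSmono⟩
  have hall : ∀ k, q k ∈ S n := by
    intro k
    have h1 : q k ∈ S (max n k) :=
      Submodule.subset_span ⟨⟨k, by omega⟩, rfl⟩
    have h2 : S n = S (max n k) := hn (max n k) (le_max_left _ _)
    rwa [h2]
  have hSt : S n ≤ t.toSubmodule := by
    apply Submodule.span_le.2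
    rintro _ ⟨i, rfl⟩
    exact hqt i
  set T : Submodule F g :=
    Submodule.span F (Set.range fun i : Fin (n+1) => q ((i : ℕ) + 1)) with hT_def
  have hTS : T ≤ S n := by
    apply Submodule.span_le.2
    rintro _ ⟨i, rfl⟩
    exact hall _
  -- p maps S n into T
  have hScomm : ∀ v ∈ S n, ∀ w ∈ S n, ⁅v, w⁆ = 0 := by
    have : ∀ a ∈ (Set.range fun i : Fin (n+1) => q i),
        ∀ b ∈ (Set.range fun i : Fin (n+1) => q i), ⁅a, b⁆ = 0 := by
      rintro _ ⟨i, rfl⟩ _ ⟨j, rfl⟩; exact hqcomm i j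
    exact lie_eq_zero_of_mem_span this
  have hmapsto : ∀ v ∈ S n, p v ∈ T := by
    intro v hv
    obtain ⟨c, hc⟩ := Submodule.mem_span_range_iff_exists_fun F |>.1 hv
    rw [← hc, tm_sum hp _ _ _ (fun i j : Fin (n+1) => hqcomm i j)]
    refine Submodule.sum_mem _ fun i _ => Submodule.smul_mem _ _ ?_
    have : p (q (i : ℕ)) = q ((i : ℕ) + 1) := by
      rw [hq_def]; exact (Function.iterate_succ_apply' p _ x).symm
    rw [this]
    exact Submodule.subset_span ⟨i, rfl⟩
  -- linear independence of the images of a basis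
  set N := finrank F (S n) with hN
  set b := Module.finBasis F (S n) with hb
  have hut : ∀ j : Fin N, p ((b j : g)) ∈ T := fun j => hmapsto _ (b j).2
  have hindep : LinearIndependent F (fun j : Fin N => p ((b j : g))) := by
    rw [Fintype.linearIndependent_iff]
    intro co hco
    have hd : ∀ j, ∃ d : F, d ^ 2 = co j := fun j =>
      IsAlgClosed.exists_pow_nat_eq (co j) (by norm_num)
    choose d hd using hd
    intro j
    have hsum : p (∑ i, d i • ((b i : g))) = 0 := by
      rw [tm_sum hp _ _ _ (fun i j => hScomm _ (b i).2 _ (b j).2)]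
      simpa only [hd] using hco
    have h0 : (∑ i, d i • ((b i : g))) ∈ (t : Set g) := by
      apply hSt
      exact Submodule.sum_mem _ fun i _ => Submodule.smul_mem _ _ (b i).2
    have hz : (0 : g) ∈ (t : Set g) := t.zero_mem
    have := ht.2.injOn h0 hz (by rw [hsum, tm_zero hp])
    have hcoe : ((∑ i, d i • b i : S n) : g) = 0 := by
      push_cast
      exact this
    have hbz : (∑ i, d i • b i : S n) = 0 := by
      exact_mod_cast hcoe
    have hdz : ∀ i, d i = 0 := by
      have := Fintype.linearIndependent_iff.1 b.linearIndependent d hbz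
      exact this
    rw [← hd j, hdz j, zero_pow (by norm_num)]
  have hcard : N ≤ finrank F T := by
    have : LinearIndependent F (fun j : Fin N => (⟨p ((b j : g)), hut j⟩ : T)) := by
      apply LinearIndependent.of_comp T.subtype
      convert hindep
      rfl
    simpa using this.fintype_card_le_finrank
  have hTeq : T = S n := Submodule.eq_of_le_of_finrank_le hTS (le_trans hN.ge hcard)
  have hxT : x ∈ T := by rw [hTeq]; exact hall 0
  obtain ⟨c, hc⟩ := Submodule.mem_span_range_iff_exists_fun F |>.1 hxT
  exact ⟨n + 1, c, hc.symm⟩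
open Module Polynomial

variable {F : Type*} [Field F] {g : Type*} [LieRing g] [LieAlgebra F g]

lemma ad_iterate_end {p : g → g} (hp : IsTwoMap F p) (x : g) (k : ℕ) :
    LieAlgebra.ad F g (p^[k] x) = (LieAlgebra.ad F g x) ^ (2 ^ k) := by
  ext y
  rw [LieAlgebra.ad_apply]
  exact ad_iterate hp x k y

lemma ad_isSemisimple [IsAlgClosed F] [CharP F 2] [FiniteDimensional F g]
    {p : g → g} (hp : IsTwoMap F p) {t : LieSubalgebra F g} (ht : IsTorus F p t)
    {x : g} (hx : x ∈ t) : (LieAlgebra.ad F g x).IsSemisimple := by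
  obtain ⟨m, c, hc⟩ := exists_comb hp ht hx
  set f : F[X] := X - ∑ i : Fin m, C (c i) * X ^ (2 ^ ((i : ℕ) + 1)) with hf_def
  have hderiv : derivative f = 1 := by
    rw [hf_def, derivative_sub, derivative_X, map_sum]
    have : ∀ i : Fin m, derivative (C (c i) * X ^ (2 ^ ((i : ℕ) + 1))) = 0 := by
      intro i
      rw [derivative_C_mul_X_pow]
      have h2 : ((2 ^ ((i : ℕ) + 1) : ℕ) : F) = 0 := by
        have h2' : ((2 : ℕ) : F) = 0 := CharP.cast_eq_zero F 2
        rw [Nat.cast_pow, h2']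
        exact zero_pow (Nat.succ_ne_zero _)
      rw [h2, mul_zero, map_zero, zero_mul]
    rw [Finset.sum_congr rfl (fun i _ => this i), Finset.sum_const_zero, sub_zero]
  have hsep : f.Separable := by
    rw [Polynomial.Separable, hderiv]
    exact isCoprime_one_right
  have hsf : Squarefree f := hsep.squarefree
  have haeval : aeval (LieAlgebra.ad F g x) f = 0 := by
    rw [hf_def, map_sub, aeval_X, map_sum]
    have : ∀ i : Fin m, aeval (LieAlgebra.ad F g x) (C (c i) * X ^ (2 ^ ((i : ℕ) + 1)))
        = c i • (LieAlgebra.ad F g x) ^ (2 ^ ((i : ℕ) + 1)) := by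
      intro i
      rw [map_mul, aeval_C, map_pow, aeval_X]
      rw [Algebra.smul_def]
    rw [Finset.sum_congr rfl (fun i _ => this i)]
    have had : (∑ i : Fin m, c i • (LieAlgebra.ad F g x) ^ (2 ^ ((i : ℕ) + 1)))
        = LieAlgebra.ad F g x := by
      have h1 : (∑ i : Fin m, c i • (LieAlgebra.ad F g x) ^ (2 ^ ((i : ℕ) + 1)))
          = ∑ i : Fin m, c i • (LieAlgebra.ad F g).toLinearMap (p^[(i : ℕ) + 1] x) := by
        refine Finset.sum_congr rfl fun i _ => ?_
        rw [← ad_iterate_end hp x ((i : ℕ) + 1)]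
        rfl
      rw [h1]
      have h2 : (∑ i : Fin m, c i • (LieAlgebra.ad F g).toLinearMap (p^[(i : ℕ) + 1] x))
          = (LieAlgebra.ad F g).toLinearMap (∑ i : Fin m, c i • p^[(i : ℕ) + 1] x) := by
        rw [map_sum]
        exact Finset.sum_congr rfl fun i _ => (map_smul _ _ _).symm
      rw [h2, ← hc]
      rfl
    rw [had, sub_self]
  exact Module.End.isSemisimple_of_squarefree_aeval_eq_zero hsf haeval

lemma torus_abelian [IsAlgClosed F] [CharP F 2] [FiniteDimensional F g]
    {p : g → g} (hp : IsTwoMap F p) {t : LieSubalgebra F g} (ht : IsTorus F p t) :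
    ∀ x ∈ t, ∀ y ∈ t, ⁅x, y⁆ = 0 := by
  intro x hx y hy
  by_contra hxy
  -- restrict ad x to t
  have hinv : ∀ v ∈ t.toSubmodule, (LieAlgebra.ad F g x) v ∈ t.toSubmodule := by
    intro v hv
    rw [LieAlgebra.ad_apply]
    exact t.lie_mem hx hv
  have hmem : t.toSubmodule ∈ (LieAlgebra.ad F g x).invtSubmodule := by
    rw [Module.End.mem_invtSubmodule]
    intro v hv
    exact hinv v hv
  set B : Module.End F t.toSubmodule := LinearMap.restrict (LieAlgebra.ad F g x) hmem with hB
  have hBss : B.IsSemisimple := (ad_isSemisimple hp ht hx).restrict hmem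
  have hBfs := hBss.isFinitelySemisimple
  -- B is nonzero
  have hBy : B ⟨y, hy⟩ = ⟨⁅x, y⁆, t.lie_mem hx hy⟩ := by
    apply Subtype.ext
    show (LieAlgebra.ad F g x) y = ⁅x, y⁆
    simp [LieAlgebra.ad_apply]
  have hBne : B ≠ 0 := by
    intro h0
    rw [h0] at hBy
    apply hxy
    have := congrArg (Subtype.val) hBy
    simpa using this.symm
  -- find a nonzero eigenvalue
  have htop : ⨆ μ, B.maxGenEigenspace μ = ⊤ := Module.End.iSup_maxGenEigenspace_eq_top B
  have hexists : ∃ μ : F, μ ≠ 0 ∧ B.eigenspace μ ≠ ⊥ := by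
    by_contra hcon
    push_neg at hcon
    have hker : ∀ μ, B.maxGenEigenspace μ ≤ LinearMap.ker B := by
      intro μ
      rw [hBfs.maxGenEigenspace_eq_eigenspace]
      rcases eq_or_ne μ 0 with rfl | hμ
      · intro v hv
        rw [Module.End.mem_eigenspace_iff] at hv
        rw [LinearMap.mem_ker, hv, zero_smul]
      · rw [hcon μ hμ]
        exact bot_le
    have : (⊤ : Submodule F t.toSubmodule) ≤ LinearMap.ker B := by
      rw [← htop]
      exact iSup_le hker
    apply hBne
    ext v
    simpa using this (Submodule.mem_top (x := v))
  obtain ⟨μ, hμ, hEig⟩ := hexists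
  obtain ⟨z', hz'mem, hz'ne⟩ := Submodule.exists_mem_ne_zero_of_ne_bot hEig
  have hz'eig : B z' = μ • z' := Module.End.mem_eigenspace_iff.1 hz'mem
  set z : g := (z' : g) with hz
  have hzt : z ∈ t := z'.2
  have hzne : z ≠ 0 := fun h => hz'ne (Subtype.ext h)
  have hxz : ⁅x, z⁆ = μ • z := by
    have := congrArg (Subtype.val) hz'eig
    change (LieAlgebra.ad F g x) z' = ((μ • z' : t.toSubmodule) : g) at this
    simpa [LieAlgebra.ad_apply] using this
  -- now use semisimplicity of ad z
  set C := LieAlgebra.ad F g z with hC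
  have hCss := ad_isSemisimple hp ht hzt
  have hCfs := hCss.isFinitelySemisimple
  have hCx : C x = -(μ • z) := by
    rw [hC, LieAlgebra.ad_apply, ← lie_skew, hxz]
  have hCxne : C x ≠ 0 := by
    rw [hCx]
    simp only [ne_eq, neg_eq_zero, smul_eq_zero]
    tauto
  have hCCx : C (C x) = 0 := by
    rw [hCx, map_neg, map_smul, hC, LieAlgebra.ad_apply, lie_self, smul_zero, neg_zero]
  have hmem2 : x ∈ (C.genEigenspace 0) 2 := by
    rw [Module.End.mem_genEigenspace]
    refine ⟨2, by norm_num, ?_⟩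
    rw [LinearMap.mem_ker]
    simp only [zero_smul, sub_zero]
    rw [pow_two, Module.End.mul_apply, hCCx]
  have : x ∈ C.eigenspace 0 := by
    rw [← hCfs.genEigenspace_eq_eigenspace 0 (by norm_num : (0 : ℕ∞) < 2)]
    exact hmem2
  rw [Module.End.mem_eigenspace_iff, zero_smul] at this
  exact hCxne this

lemma sum_finrank_le_finrank {ι : Type*} [Fintype ι] [FiniteDimensional F g]
    (N : ι → Submodule F g) (h : iSupIndep N) :
    ∑ i, finrank F (N i) ≤ finrank F g := by
  classical
  have key : ∀ s : Finset ι, ∑ i ∈ s, finrank F (N i) = finrank F ↥(s.sup N) := by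
    intro s
    induction s using Finset.induction with
    | empty => rw [Finset.sup_empty, finrank_bot, Finset.sum_empty]
    | @insert a s ha ih =>
      rw [Finset.sum_insert ha, Finset.sup_insert, ih]
      have hdisj : Disjoint (N a) (s.sup N) := by
        refine (h.disjoint_biSup (x := a) (y := (s : Set ι)) (by simpa using ha)).mono_right ?_
        rw [Finset.sup_eq_iSup]
        simp
      have hfr := Submodule.finrank_sup_add_finrank_inf_eq (N a) (s.sup N)
      rw [hdisj.eq_bot] at hfr
      simp only [finrank_bot, add_zero] at hfr
      omega
  rw [key Finset.univ]
  exact Submodule.finrank_le _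
lemma mem_rootSpace_iff {t : LieSubalgebra F g} {lam : Module.Dual F t} {v : g} :
    v ∈ rootSpace t lam ↔ ∀ x : t, ⁅(x : g), v⁆ = lam x • v := Iff.rfl

end Helpers

open Module in
/-- a centerless Lie 2-algebra of toral rank `r` admits a basis of the dual
of its maximal torus consisting of roots, and `dim g ≥ 2r`. -/
theorem statement1
    {F : Type*} [Field F] [IsAlgClosed F] [CharP F 2]
    {g : Type*} [LieRing g] [LieAlgebra F g] [FiniteDimensional F g]
    (p : g → g) (hp : IsTwoMap F p)
    (hcenter : LieAlgebra.center F g = ⊥)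
    (r : ℕ) (t : LieSubalgebra F g) (hmax : IsMaxTorus F p t)
    (hdimt : Module.finrank F t = r)
    (hrank : ∀ s : LieSubalgebra F g, IsTorus F p s → Module.finrank F s ≤ r) :
    (∃ b : Basis (Fin r) F (Module.Dual F t), ∀ i, b i ∈ rootSet t) ∧
      2 * r ≤ Module.finrank F g := by

  classical
  obtain ⟨ht, -⟩ := hmax
  have habel : ∀ x ∈ t, ∀ y ∈ t, ⁅x, y⁆ = 0 := torus_abelian hp ht
  set a : t → Module.End F g := fun y => LieAlgebra.ad F g (y : g) with ha
  have hcomm : ∀ y z : t, Commute (a y) (a z) := by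
    intro y z
    have h0 : ⁅(y : g), (z : g)⁆ = 0 := habel _ y.2 _ z.2
    have hml := (LieAlgebra.ad F g).map_lie (x := (y : g)) (y := (z : g))
    rw [h0, map_zero, Ring.lie_def] at hml
    exact (sub_eq_zero.1 hml.symm)
  have hss : ∀ y : t, (a y).IsSemisimple := fun y => ad_isSemisimple hp ht y.2
  have hmaxeq : ∀ (y : t) (μ : F), (a y).maxGenEigenspace μ = (a y).eigenspace μ :=
    fun y μ => (hss y).isFinitelySemisimple.maxGenEigenspace_eq_eigenspace μ
  have htop : ⨆ χ : t → F, ⨅ y, (a y).maxGenEigenspace (χ y) = ⊤ :=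
    Module.End.iSup_iInf_maxGenEigenspace_eq_top_of_iSup_maxGenEigenspace_eq_top_of_commute a
      (fun y z _ => hcomm y z) (fun y => Module.End.iSup_maxGenEigenspace_eq_top _)
  have hind : iSupIndep (fun χ : t → F => ⨅ y, (a y).maxGenEigenspace (χ y)) :=
    Module.End.independent_iInf_maxGenEigenspace_of_forall_mapsTo a
      (fun i j φ => Module.End.mapsTo_maxGenEigenspace_of_comm (hcomm j i) φ)
  have hroot_eq : ∀ lam : Module.Dual F t,
      (rootSpace t lam : Submodule F g) = ⨅ y : t, (a y).maxGenEigenspace (lam y) := by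
    intro lam
    ext v
    rw [Submodule.mem_iInf, mem_rootSpace_iff]
    constructor
    · intro hv y
      rw [hmaxeq, Module.End.mem_eigenspace_iff]
      show LieAlgebra.ad F g (y : g) v = lam y • v
      rw [LieAlgebra.ad_apply]
      exact hv y
    · intro hv y
      have := hv y
      rw [hmaxeq, Module.End.mem_eigenspace_iff] at this
      have h2 : LieAlgebra.ad F g (y : g) v = lam y • v := this
      rwa [LieAlgebra.ad_apply] at h2
  have hkey : ∀ χ : t → F, (⨅ y, (a y).maxGenEigenspace (χ y)) ≠ ⊥ →
      ∃ lam : Module.Dual F t, ⇑lam = χ := by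
    intro χ hne
    obtain ⟨v, hv, hvne⟩ := Submodule.exists_mem_ne_zero_of_ne_bot hne
    have hv' : ∀ y : t, ⁅(y : g), v⁆ = χ y • v := by
      intro y
      have h1 := Submodule.mem_iInf _ |>.1 hv y
      rw [hmaxeq, Module.End.mem_eigenspace_iff] at h1
      have h2 : LieAlgebra.ad F g (y : g) v = χ y • v := h1
      rwa [LieAlgebra.ad_apply] at h2
    refine ⟨⟨⟨χ, ?_⟩, ?_⟩, rfl⟩
    · intro y z
      have h1 : ⁅((y + z : t) : g), v⁆ = χ (y + z) • v := hv' (y + z)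
      have h2 : ⁅((y + z : t) : g), v⁆ = (χ y + χ z) • v := by
        have hadd : ((y + z : t) : g) = (y : g) + (z : g) := rfl
        rw [hadd, add_lie, hv' y, hv' z, add_smul]
      exact smul_left_injective F hvne (h1.symm.trans h2)
    · intro c y
      have h1 : ⁅((c • y : t) : g), v⁆ = χ (c • y) • v := hv' (c • y)
      have h2 : ⁅((c • y : t) : g), v⁆ = (c * χ y) • v := by
        have hsm : ((c • y : t) : g) = c • (y : g) := rfl
        rw [hsm, smul_lie, hv' y, smul_smul]
      exact smul_left_injective F hvne (h1.symm.trans h2)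
  -- Part (a): the roots span the dual space
  have hspan : Submodule.span F (rootSet t) = ⊤ := by
    have hco : (Submodule.span F (rootSet t)).dualCoannihilator = ⊥ := by
      rw [eq_bot_iff]
      intro x hxmem
      rw [Submodule.mem_dualCoannihilator] at hxmem
      have hroot0 : ∀ lam ∈ rootSet t, lam x = 0 := fun lam hl =>
        hxmem lam (Submodule.subset_span hl)
      have hker : ∀ χ : t → F, (⨅ y, (a y).maxGenEigenspace (χ y)) ≤ LinearMap.ker (a x) := by
        intro χ
        rcases eq_or_ne (⨅ y, (a y).maxGenEigenspace (χ y)) ⊥ with hb | hb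
        · rw [hb]; exact bot_le
        · obtain ⟨lam, hlam⟩ := hkey χ hb
          intro v hv
          have hvx : ⁅(x : g), v⁆ = lam x • v := by
            have h1 := Submodule.mem_iInf _ |>.1 hv x
            rw [hmaxeq, Module.End.mem_eigenspace_iff] at h1
            have h2 : LieAlgebra.ad F g (x : g) v = χ x • v := h1
            rw [LieAlgebra.ad_apply] at h2
            rw [h2, ← hlam]
          have hlx : lam x = 0 := by
            rcases eq_or_ne lam 0 with rfl | hlne
            · simp
            · apply hroot0 lam
              refine ⟨hlne, ?_⟩
              intro hbot
              apply hb
              rw [hroot_eq] at hbot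
              rw [← hbot]
              congr 1
              ext y
              rw [hlam]
          rw [LinearMap.mem_ker]
          show LieAlgebra.ad F g (x : g) v = 0
          rw [LieAlgebra.ad_apply, hvx, hlx, zero_smul]
      have hkerx : LinearMap.ker (a x) = ⊤ := by
        rw [eq_top_iff, ← htop]
        exact iSup_le hker
      have hcen : (x : g) ∈ LieAlgebra.center F g := by
        rw [LieAlgebra.center, LieModule.mem_maxTrivSubmodule]
        intro v
        have h1 : (a x) v = 0 := by
          rw [← LinearMap.mem_ker, hkerx]; exact Submodule.mem_top
        have h2 : ⁅(x : g), v⁆ = 0 := by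
          have := h1; rwa [ha, LieAlgebra.ad_apply] at this
        rw [← lie_skew, h2, neg_zero]
      rw [hcenter] at hcen
      have hx0 : (x : g) = 0 := by
        simpa using hcen
      rw [Submodule.mem_bot]
      exact Subtype.ext hx0
    have h1 := Subspace.finrank_add_finrank_dualCoannihilator_eq (Submodule.span F (rootSet t))
    rw [hco, finrank_bot, add_zero] at h1
    apply Submodule.eq_top_of_finrank_eq
    rw [h1, Subspace.dual_finrank_eq]
  -- extract basis from the spanning set of roots
  obtain ⟨bset, hbsub, hbspan, hbind⟩ := exists_linearIndependent F (rootSet t)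
  rw [hspan] at hbspan
  haveI : Fintype bset := hbind.setFinite.fintype
  set hBB : Basis bset F (Module.Dual F t) :=
    Basis.mk hbind (by rw [Subtype.range_coe]; exact hbspan.ge) with hBBdef
  have hcard : Fintype.card bset = r := by
    have h1 := Module.finrank_eq_card_basis hBB
    rw [Subspace.dual_finrank_eq, hdimt] at h1
    exact h1.symm
  set e : bset ≃ Fin r := Fintype.equivFinOfCardEq hcard with he
  set B : Basis (Fin r) F (Module.Dual F t) := hBB.reindex e with hBdef
  have hBroot : ∀ i, B i ∈ rootSet t := by
    intro i
    rw [hBdef, Basis.reindex_apply, hBBdef, Basis.mk_apply]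
    exact hbsub (e.symm i).2
  refine ⟨⟨B, hBroot⟩, ?_⟩
  -- Part (b): dimension bound
  have hne : ∀ i : Fin r, rootSpace t (B i) ≠ ⊥ := fun i => (hBroot i).2
  set e' : Fin (r+1) → (t → F) := fun k => Fin.cases (0 : t → F) (fun i => ⇑(B i)) k with he'
  have he'inj : Function.Injective e' := by
    intro k l hkl
    rcases Fin.eq_zero_or_eq_succ k with rfl | ⟨i, rfl⟩ <;>
      rcases Fin.eq_zero_or_eq_succ l with rfl | ⟨j, rfl⟩
    · rfl
    · exfalso
      rw [he'] at hkl
      simp only [Fin.cases_zero, Fin.cases_succ] at hkl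
      exact (hBroot j).1 (LinearMap.coe_injective hkl.symm)
    · exfalso
      rw [he'] at hkl
      simp only [Fin.cases_zero, Fin.cases_succ] at hkl
      exact (hBroot i).1 (LinearMap.coe_injective hkl)
    · rw [he'] at hkl
      simp only [Fin.cases_succ] at hkl
      have := B.injective (LinearMap.coe_injective hkl)
      rw [this]
  set N : Fin (r+1) → Submodule F g :=
    fun k => Fin.cases t.toSubmodule (fun i => rootSpace t (B i)) k with hN
  have hNle : ∀ k, N k ≤ ⨅ y, (a y).maxGenEigenspace (e' k y) := by
    intro k
    refine Fin.cases ?_ ?_ k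
    · simp only [hN, he', Fin.cases_zero]
      intro v hv
      rw [Submodule.mem_iInf]
      intro y
      rw [hmaxeq, Module.End.mem_eigenspace_iff]
      show LieAlgebra.ad F g (y : g) v = (0 : t → F) y • v
      rw [LieAlgebra.ad_apply]
      have h1 : ⁅(y : g), v⁆ = 0 := habel _ y.2 _ hv
      rw [h1]
      simp
    · intro i
      simp only [hN, he', Fin.cases_succ]
      rw [hroot_eq]
  have hindN : iSupIndep N := (hind.comp he'inj).mono hNle
  have hsum := sum_finrank_le_finrank N hindN
  rw [Fin.sum_univ_succ] at hsum
  have h0 : finrank F (N 0) = r := by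
    have hrw : N 0 = t.toSubmodule := rfl
    rw [hrw]
    exact hdimt
  have h1 : ∀ i : Fin r, 1 ≤ finrank F (N i.succ) := by
    intro i
    have hrw : N i.succ = rootSpace t (B i) := rfl
    rw [hrw, Nat.one_le_iff_ne_zero]
    intro h0'
    exact hne i (Submodule.finrank_eq_zero.1 h0')
  have h2 : r ≤ ∑ i : Fin r, finrank F (N i.succ) := by
    calc r = ∑ _i : Fin r, 1 := by simp
      _ ≤ ∑ i : Fin r, finrank F (N i.succ) := Finset.sum_le_sum (fun i _ => h1 i)
  omega
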